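/- If H is a panchromatic pattern, then the complement digraph of H contains no odd directed cycle. -/

import Mathlib

/-- A walk in `D` (as a list of at least two vertices) whose sequence of
arc-colours (given by `ς`) forms a walk in `H`. -/
def IsHWalk {V W : Type} (D : V → V → Prop) (H : W → W → Prop) (ς : V → V → W)
    (l : List V) : Prop :=
  2 ≤ l.length ∧ l.Chain' D ∧ ((l.zip l.tail).map fun p => ς p.1 p.2).Chain' H

/-- There is an `H`-walk in `D` from `a` to `b`. -/
def HReach {V W : Type} (D : V → V → Prop) (H : W → W → Prop) (ς : V → V → W)
    (a b : V) : Prop :=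
  ∃ l : List V, IsHWalk D H ς l ∧ l.head? = some a ∧ l.getLast? = some b

/-- `K` is an `H`-kernel of the `H`-coloured digraph `D`: it is `H`-independent
and `H`-absorbent. -/
def IsHKernel {V W : Type} (D : V → V → Prop) (H : W → W → Prop) (ς : V → V → W)
    (K : Set V) : Prop :=
  (∀ a ∈ K, ∀ b ∈ K, a ≠ b → ¬ HReach D H ς a b) ∧
  (∀ v, v ∉ K → ∃ b ∈ K, HReach D H ς v b)

/-- `H` is a panchromatic pattern: every digraph with every `H`-colouring
admits an `H`-kernel. -/
def IsPanchromatic {W : Type} (H : W → W → Prop) : Prop :=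
  ∀ (V : Type) (D : V → V → Prop) (ς : V → V → W), ∃ K : Set V, IsHKernel D H ς K

/-- `H` is bicomplete: the vertex set splits as `X ⊔ Xᶜ`, both parts induce
complete digraphs (with loops), and all arcs from `Xᶜ` to `X` are present. -/
def IsBicomplete {W : Type} (H : W → W → Prop) : Prop :=
  ∃ X : Set W, (∀ a ∈ X, ∀ b ∈ X, H a b) ∧ (∀ a ∉ X, ∀ b ∉ X, H a b) ∧
    (∀ x ∈ X, ∀ y ∉ X, H y x)

/-- `H` is an expansion of `2K₁`: two nonempty classes, each inducing a
complete looped digraph, with no arcs between them. -/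
def IsExpansion2K1 {W : Type} (H : W → W → Prop) : Prop :=
  ∃ C : Set W, C.Nonempty ∧ Cᶜ.Nonempty ∧
    (∀ a ∈ C, ∀ b ∈ C, H a b) ∧ (∀ a ∈ Cᶜ, ∀ b ∈ Cᶜ, H a b) ∧
    (∀ a b, (a ∈ C ∧ b ∈ Cᶜ) ∨ (a ∈ Cᶜ ∧ b ∈ C) → ¬ H a b)

/-- If `H` is a panchromatic pattern, its complement digraph contains no odd
directed cycle. -/
theorem stmt3 {W : Type} (H : W → W → Prop) (hH : IsPanchromatic H) :
    ¬ ∃ (k : ℕ) (x : ℕ → W), Odd k ∧ 1 ≤ k ∧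
      (∀ i < k, ∀ j < k, x i = x j → i = j) ∧ x k = x 0 ∧
      (∀ i < k, ¬ H (x i) (x (i + 1))) := by
  rintro ⟨k, x, hodd, hk1, -, hxk, hnc⟩
  set n := 3 * k with hn
  have hk0 : 0 < k := hk1
  have hn3 : 3 ≤ n := by omega
  haveI : NeZero n := ⟨by omega⟩
  haveI : Fact (1 < n) := ⟨by omega⟩
  have hdvd : k ∣ n := dvd_mul_left k 3
  -- colour lemma on ℕ
  have hcol : ∀ m : ℕ, ¬ H (x (m % k)) (x ((m + 1) % k)) := by
    intro m
    have h1 : m % k < k := Nat.mod_lt _ hk0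
    have hmod : (m + 1) % k = (m % k + 1) % k := (Nat.mod_add_mod m k 1).symm
    rcases Nat.lt_or_ge (m % k + 1) k with h | h
    · rw [hmod, Nat.mod_eq_of_lt h]
      exact hnc _ h1
    · have hk : m % k + 1 = k := by omega
      have h2 := hnc _ h1
      rw [hk, hxk] at h2
      rw [hmod, hk, Nat.mod_self]
      exact h2
  set D : ZMod n → ZMod n → Prop := fun a b => b = a + 1 with hD
  set ς : ZMod n → ZMod n → W := fun a _ => x (a.val % k) with hς
  -- colour lemma on ZMod n
  have hcolz : ∀ a : ZMod n, ¬ H (x (a.val % k)) (x ((a + 1).val % k)) := by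
    intro a
    have : (a + 1).val % k = (a.val + 1) % k := by
      rw [ZMod.val_add, ZMod.val_one, Nat.mod_mod_of_dvd _ hdvd]
    rw [this]
    exact hcol a.val
  -- characterize HReach
  have hreach : ∀ a b : ZMod n, HReach D H ς a b → b = a + 1 := by
    rintro a b ⟨l, ⟨hlen, hchain, hHc⟩, hhead, hlast⟩
    match l with
    | [] => simp at hhead
    | [u] => simp at hlen
    | [u, v] =>
      simp only [List.head?_cons, Option.some.injEq] at hhead
      have hlast' : v = b := by simpa using hlast
      have huv : D u v := by
        simp only [List.Chain', List.isChain_cons_cons, List.isChain_singleton, and_true] at hchain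
        exact hchain
      rw [← hlast', ← hhead]
      exact huv
    | u :: v :: w :: t =>
      exfalso
      have huv : D u v := (List.isChain_cons_cons.mp hchain).1
      have hHc' : H (ς u v) (ς v w) := by
        simp only [List.zip_cons_cons, List.tail_cons, List.map_cons,
          List.Chain', List.isChain_cons_cons] at hHc
        exact hHc.1
      have hv : v = u + 1 := huv
      rw [hς] at hHc'
      simp only at hHc'
      rw [hv] at hHc'
      exact hcolz u hHc'
  have hreach' : ∀ a : ZMod n, HReach D H ς a (a + 1) := by
    intro a
    refine ⟨[a, a + 1], ⟨by simp, ?_, ?_⟩, by simp, by simp⟩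
    · simp only [List.Chain', List.isChain_cons_cons, List.isChain_singleton, and_true]
      rfl
    · exact List.isChain_singleton _
  obtain ⟨K, hind, habs⟩ := hH (ZMod n) D ς
  have hne : ∀ a : ZMod n, a ≠ a + 1 := by
    intro a h
    have : (0 : ZMod n) = 1 := by
      have := add_right_cancel (a := a) (b := (0 : ZMod n)) (c := a)
      simpa using congrArg (fun y => y - a) h
    exact zero_ne_one this
  have key : ∀ v : ZMod n, (v + 1 ∈ K ↔ v ∉ K) := by
    intro v
    constructor
    · intro h1 hv
      exact hind v hv (v + 1) h1 (hne v) (hreach' v)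
    · intro hv
      obtain ⟨b, hb, hrb⟩ := habs v hv
      rwa [← hreach v b hrb]
  -- parity argument
  have par : ∀ m : ℕ, (((2 * m : ℕ) : ZMod n) ∈ K ↔ ((0 : ℕ) : ZMod n) ∈ K) := by
    intro m
    induction m with
    | zero => simp
    | succ m ih =>
      have : ((2 * (m + 1) : ℕ) : ZMod n) = ((2 * m : ℕ) : ZMod n) + 1 + 1 := by
        push_cast; ring
      rw [this, key, key]
      tauto
  obtain ⟨t, ht⟩ := hodd.mul (by decide : Odd (3 : ℕ)) -- careful
  have hnt : n = 2 * t + 1 := by rw [hn]; omega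
  have h0 : ((n : ℕ) : ZMod n) = ((0 : ℕ) : ZMod n) := by simp [ZMod.natCast_self]
  have h1 : ((n : ℕ) : ZMod n) = ((2 * t : ℕ) : ZMod n) + 1 := by
    rw [hnt]; push_cast; ring
  have h2 := key ((2 * t : ℕ) : ZMod n)
  rw [← h1, h0] at h2
  have h3 := par t
  tauto
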